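/- Let V be a category with coproducts and an initial object, and W a category with coproducts. For a coproduct-preserving functor R : V → W, the induced functor GR : GV → GW on enriched graphs (applying R to each hom) is both distributive and path-like. -/

import Mathlib

open CategoryTheory Limits

noncomputable section

universe v₁ v₂ v₃ u₁ u₂ u₃

/-- A `V`-enriched graph: a set of objects together with a `V`-object of arrows
between any ordered pair of objects. -/
structure VGraph (V : Type u₁) [Category.{v₁} V] : Type (u₁ + 1) where
  objs : Type
  hom : objs → objs → V

variable {V : Type u₁} [Category.{v₁} V] {W : Type u₂} [Category.{v₂} W]
  {Y : Type u₃} [Category.{v₃} Y]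

/-- A morphism of `V`-enriched graphs. -/
structure GHom (X Z : VGraph V) : Type (max 1 v₁) where
  obj : X.objs → Z.objs
  map : ∀ a b : X.objs, X.hom a b ⟶ Z.hom (obj a) (obj b)

/-- The identity morphism of `V`-graphs. -/
def GHom.id (X : VGraph V) : GHom X X := ⟨fun a => a, fun _ _ => 𝟙 _⟩

/-- Composition of morphisms of `V`-graphs. -/
def GHom.comp {X Z T : VGraph V} (F : GHom X Z) (G : GHom Z T) : GHom X T :=
  ⟨fun a => G.obj (F.obj a), fun a b => F.map a b ≫ G.map (F.obj a) (F.obj b)⟩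

/-- A functor `GV ⥤ GW` over `Set`: it assigns to every `V`-graph `X` a `W`-graph with
the same set of objects (recorded by its homs only), functorially. -/
structure OverSetFunctor (V : Type u₁) [Category.{v₁} V] (W : Type u₂) [Category.{v₂} W] where
  hom : ∀ X : VGraph V, X.objs → X.objs → W
  map : ∀ {X Z : VGraph V} (F : GHom X Z) (a b : X.objs),
    hom X a b ⟶ hom Z (F.obj a) (F.obj b)
  map_id : ∀ (X : VGraph V) (a b : X.objs), map (GHom.id X) a b = 𝟙 (hom X a b)
  map_comp : ∀ {X Z T : VGraph V} (F : GHom X Z) (G : GHom Z T) (a b : X.objs),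
    map (F.comp G) a b = map F a b ≫ map G (F.obj a) (F.obj b)

section Seq
variable [HasInitial V]

/-- The `V`-graph associated to a finite sequence `(Z₁,…,Zₙ)` of objects of `V`:
objects `{0,…,n}`, hom from `i-1` to `i` equal to `Zᵢ`, all other homs initial. -/
abbrev seqGraph {n : ℕ} (Z : Fin n → V) : VGraph V :=
  ⟨Fin (n + 1), fun i j =>
    if h : (j : ℕ) = (i : ℕ) + 1 then Z ⟨(i : ℕ), by have := j.isLt; omega⟩ else ⊥_ V⟩

/-- The functor `T̄ₙ` associated to a functor over `Set`:
`T̄(Z₁,…,Zₙ) = T(Z₁,…,Zₙ)(0,n)`. -/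
def tbar (T : OverSetFunctor V W) {n : ℕ} (Z : Fin n → V) : W :=
  T.hom (seqGraph Z) 0 (Fin.last n)

theorem seqGraph_hom_pos {n : ℕ} (Z : Fin n → V) (a b : Fin (n + 1))
    (h : (b : ℕ) = (a : ℕ) + 1) :
    (seqGraph Z).hom a b = Z ⟨(a : ℕ), by have := b.isLt; omega⟩ := dif_pos h

theorem seqGraph_hom_neg {n : ℕ} (Z : Fin n → V) (a b : Fin (n + 1))
    (h : ¬(b : ℕ) = (a : ℕ) + 1) :
    (seqGraph Z).hom a b = ⊥_ V := dif_neg h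

/-- The morphism of sequence graphs induced by a family of morphisms. -/
def seqGHom {n : ℕ} {Z Z' : Fin n → V} (g : ∀ k, Z k ⟶ Z' k) :
    GHom (seqGraph Z) (seqGraph Z') where
  obj := fun a => a
  map a b :=
    if h : (b : ℕ) = (a : ℕ) + 1 then
      eqToHom (seqGraph_hom_pos Z a b h) ≫ g ⟨(a : ℕ), by have := b.isLt; omega⟩ ≫
        eqToHom (seqGraph_hom_pos Z' a b h).symm
    else eqToHom (by rw [seqGraph_hom_neg Z a b h, seqGraph_hom_neg Z' a b h])

/-- The action of `tbar` on morphisms, in all variables at once. -/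
def tbarMap (T : OverSetFunctor V W) {n : ℕ} {Z Z' : Fin n → V} (g : ∀ k, Z k ⟶ Z' k) :
    tbar T Z ⟶ tbar T Z' := by
  exact T.map (seqGHom g) 0 (Fin.last n)

/-- The morphism of graphs from a sequence graph of consecutive homs into `X`,
determined by a path `x₀, …, xₙ` in `X`. -/
def pathGHom (X : VGraph V) {n : ℕ} (x : Fin (n + 1) → X.objs) :
    GHom (seqGraph (fun k : Fin n => X.hom (x k.castSucc) (x k.succ))) X where
  obj := fun i => x i
  map a b :=
    if h : (b : ℕ) = (a : ℕ) + 1 then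
      eqToHom (seqGraph_hom_pos _ a b h) ≫
        eqToHom (by
          rw [show (Fin.succ ⟨(a : ℕ), by have := b.isLt; omega⟩ : Fin (n + 1)) = b from
            Fin.ext (by simp; omega)]
          rfl)
    else eqToHom (seqGraph_hom_neg _ a b h) ≫ initial.to _

end Seq

section PathLike
variable [HasInitial V] [HasCoproducts.{0} W]

/-- The type of paths from `a` to `b` in a `V`-graph `X`. -/
structure PathIdx (X : VGraph V) (a b : X.objs) : Type where
  n : ℕ
  pts : Fin (n + 1) → X.objs
  h0 : pts 0 = a
  h1 : pts (Fin.last n) = b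

/-- The canonical comparison map `∐ T̄ᵢ X(xᵢ₋₁,xᵢ) ⟶ TX(a,b)`. -/
def canonicalPathMap (T : OverSetFunctor V W) (X : VGraph V) (a b : X.objs) :
    (∐ fun p : PathIdx X a b =>
      tbar T (fun k : Fin p.n => X.hom (p.pts k.castSucc) (p.pts k.succ))) ⟶ T.hom X a b :=
  Sigma.desc fun p =>
    T.map (pathGHom X p.pts) 0 (Fin.last p.n) ≫
      eqToHom (show T.hom X (p.pts 0) (p.pts (Fin.last p.n)) = T.hom X a b by rw [p.h0, p.h1])

/-- A functor over `Set` is path-like when all canonical maps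
`∐ T̄ᵢ X(xᵢ₋₁,xᵢ) ⟶ TX(a,b)` are isomorphisms. -/
def OverSetFunctor.PathLike (T : OverSetFunctor V W) : Prop :=
  ∀ (X : VGraph V) (a b : X.objs), IsIso (canonicalPathMap T X a b)

end PathLike

section Distrib
variable [HasInitial V] [HasCoproducts.{0} V] [HasCoproducts.{0} W]

/-- The family of morphisms updating one component. -/
def updateHom {α : Type u₃} [DecidableEq α] (Z : α → V) (i : α) {v v' : V} (g : v ⟶ v') :
    ∀ j : α, Function.update Z i v j ⟶ Function.update Z i v' j := fun j =>
  if h : j = i then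
    eqToHom (by rw [h]; simp) ≫ g ≫ eqToHom (by rw [h]; simp)
  else eqToHom (by rw [Function.update_of_ne h, Function.update_of_ne h])

/-- A functor over `Set` is distributive when each `T̄ₙ` preserves coproducts in each
variable, as witnessed by the canonical comparison maps being isomorphisms. -/
def OverSetFunctor.Distrib (T : OverSetFunctor V W) : Prop :=
  ∀ (n : ℕ) (Z : Fin n → V) (i : Fin n) (ι : Type) (f : ι → V),
    IsIso (Sigma.desc fun k : ι =>
      (tbarMap T (updateHom Z i (Sigma.ι f k)) :
        tbar T (Function.update Z i (f k)) ⟶ tbar T (Function.update Z i (∐ f))))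

end Distrib


section Stmt6
variable [HasInitial V] [HasCoproducts.{0} V] [HasCoproducts.{0} W]

/-- The functor `GR : GV ⥤ GW` over `Set` induced by `R : V ⥤ W`, applying `R` to
each hom. -/
def graphMapFunctor (R : V ⥤ W) : OverSetFunctor V W where
  hom X a b := R.obj (X.hom a b)
  map F a b := R.map (F.map a b)
  map_id X a b := by simp [GHom.id]
  map_comp F G a b := by simp [GHom.comp]

theorem tbar_graphMap_eq_bot (R : V ⥤ W) {n : ℕ} (hn : n ≠ 1) (Z : Fin n → V) :
    tbar (graphMapFunctor R) Z = R.obj (⊥_ V) := by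
  show R.obj ((seqGraph Z).hom 0 (Fin.last n)) = R.obj (⊥_ V)
  rw [seqGraph_hom_neg]
  simpa using hn

theorem tbar_graphMap_eq_one (R : V ⥤ W) (Z : Fin 1 → V) :
    tbar (graphMapFunctor R) Z = R.obj (Z 0) := by
  show R.obj ((seqGraph Z).hom 0 (Fin.last 1)) = R.obj (Z 0)
  rw [seqGraph_hom_pos Z 0 (Fin.last 1) (by simp)]
  congr

def isInitial_R_bot (R : V ⥤ W)
    (hR : ∀ ι : Type, Nonempty (PreservesColimitsOfShape (Discrete ι) R)) :
    IsInitial (R.obj (⊥_ V)) := by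
  haveI := (hR PEmpty).some
  exact initialIsInitial.isInitialObj R _

def isInitial_tbar_graphMap (R : V ⥤ W)
    (hR : ∀ ι : Type, Nonempty (PreservesColimitsOfShape (Discrete ι) R))
    {n : ℕ} (hn : n ≠ 1) (Z : Fin n → V) :
    IsInitial (tbar (graphMapFunctor R) Z) :=
  (isInitial_R_bot R hR).ofIso (eqToIso (tbar_graphMap_eq_bot R hn Z)).symm

/-- For a coproduct-preserving functor `R : V ⥤ W`, the induced functor `GR` on
enriched graphs is both distributive and path-like. -/
theorem graphMapFunctor_distrib_and_pathLike (R : V ⥤ W)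
    (hR : ∀ ι : Type, Nonempty (PreservesColimitsOfShape (Discrete ι) R)) :
    (graphMapFunctor R).Distrib ∧ (graphMapFunctor R).PathLike := by
  constructor
  · -- Distributivity
    intro n Z i ι f
    haveI := (hR ι).some
    rcases eq_or_ne n 1 with rfl | hn
    · -- n = 1 : the comparison map is conjugate to `sigmaComparison R f`.
      have hi : i = 0 := Subsingleton.elim _ _
      subst hi
      have e : ∀ v : V, tbar (graphMapFunctor R) (Function.update Z 0 v) = R.obj v := by
        intro v
        rw [tbar_graphMap_eq_one, Function.update_self]
      have hcomp : ∀ k : ι,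
          (tbarMap (graphMapFunctor R) (updateHom Z 0 (Sigma.ι f k)) :
            tbar (graphMapFunctor R) (Function.update Z 0 (f k)) ⟶
              tbar (graphMapFunctor R) (Function.update Z 0 (∐ f))) =
          eqToHom (e (f k)) ≫ R.map (Sigma.ι f k) ≫ eqToHom (e (∐ f)).symm := by
        intro k
        show R.map ((seqGHom (updateHom Z 0 (Sigma.ι f k))).map 0 (Fin.last 1)) = _
        have h1 : ((Fin.last 1 : Fin 2) : ℕ) = ((0 : Fin 2) : ℕ) + 1 := by simp
        simp only [seqGHom, updateHom]
        simp [eqToHom_map]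
        exact (congrArg (· ≫ _) (eqToHom_map R _)).trans (eqToHom_trans_assoc _ _ _)
      have : (Sigma.desc fun k : ι =>
          (tbarMap (graphMapFunctor R) (updateHom Z 0 (Sigma.ι f k)) :
            tbar (graphMapFunctor R) (Function.update Z 0 (f k)) ⟶
              tbar (graphMapFunctor R) (Function.update Z 0 (∐ f)))) =
          Limits.Sigma.map (fun k => eqToHom (e (f k))) ≫ sigmaComparison R f ≫
            eqToHom (e (∐ f)).symm := by
        apply Sigma.hom_ext
        intro k
        simp only [colimit.ι_desc, Cofan.mk_ι_app, hcomp k, ι_colimMap_assoc, Sigma.ι_map_assoc,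
          Discrete.functor_obj_eq_as, Discrete.natTrans_app, Category.assoc]
        rw [reassoc_of% (ι_comp_sigmaComparison R f k).symm]
      rw [this]
      infer_instance
    · -- n ≠ 1 : everything in sight is initial.
      have tinit : IsInitial (tbar (graphMapFunctor R) (Function.update Z i (∐ f))) :=
        isInitial_tbar_graphMap R hR hn _
      have sinit : ∀ k : ι,
          IsInitial (tbar (graphMapFunctor R) (Function.update Z i (f k))) := fun k =>
        isInitial_tbar_graphMap R hR hn _
      refine ⟨tinit.to _, ?_, tinit.hom_ext _ _⟩
      apply Sigma.hom_ext
      intro k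
      exact (sinit k).hom_ext _ _
  · -- Path-likeness
    intro X a b
    set T := graphMapFunctor R with hT
    -- the unique length-one path from `a` to `b`
    set p₀ : PathIdx X a b :=
      ⟨1, fun i => if i = 0 then a else b, by simp, by simp [Fin.ext_iff]⟩ with hp₀
    have eq₀ : tbar T (fun k : Fin p₀.n => X.hom (p₀.pts k.castSucc) (p₀.pts k.succ)) =
        R.obj (X.hom a b) := by
      rw [tbar_graphMap_eq_one]
      congr 1 <;> simp [hp₀, Fin.ext_iff]
    have hι : Sigma.ι (fun p : PathIdx X a b =>
          tbar T (fun k : Fin p.n => X.hom (p.pts k.castSucc) (p.pts k.succ))) p₀ ≫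
        canonicalPathMap T X a b = eqToHom eq₀ := by
      rw [canonicalPathMap, colimit.ι_desc]
      show R.map ((pathGHom X p₀.pts).map 0 (Fin.last 1)) ≫ _ = _
      have h1 : ((Fin.last 1 : Fin 2) : ℕ) = ((0 : Fin 2) : ℕ) + 1 := by simp
      simp only [pathGHom]
      simp [eqToHom_map]
      simp [p₀, eqToHom_map]
      exact (congrArg (· ≫ _) ((R.map_comp _ _).symm.trans ((congrArg R.map (eqToHom_trans _ _)).trans (eqToHom_map R _)))).trans (eqToHom_trans _ _)
    refine ⟨⟨eqToHom eq₀.symm ≫ Sigma.ι (fun p : PathIdx X a b =>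
        tbar T (fun k : Fin p.n => X.hom (p.pts k.castSucc) (p.pts k.succ))) p₀, ?_, ?_⟩⟩
    · -- hom_inv_id
      apply Sigma.hom_ext
      intro p
      rcases eq_or_ne p.n 1 with h1 | h1
      · -- any length-one path equals `p₀`
        have hp : p = p₀ := by
          obtain ⟨n, pts, h0, hl⟩ := p
          dsimp at h1
          subst h1
          have : pts = p₀.pts := by
            funext j
            fin_cases j
            · simpa [p₀] using h0
            · simpa [p₀, Fin.ext_iff] using hl
          subst this
          rfl
        subst hp
        rw [reassoc_of% hι]
        rw [Category.comp_id]; exact (eqToHom_trans_assoc _ _ _).trans (by simp)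
      · exact (isInitial_tbar_graphMap R hR h1 _).hom_ext _ _
    · -- inv_hom_id
      rw [Category.assoc, hι]
      exact (eqToHom_trans _ _).trans (eqToHom_refl _ _)

end Stmt6
end
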